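/- With the notation of the previous statement (odd residue characteristic, $\psi$ of conductor $\mathcal{O}$, $b \in \mathcal{O}^\times$), let $x \in \mathcal{O}^\times$, let $\alpha = (B, y_1, y_2) \in M_2(K) \times K \times K$, and let $\langle \alpha, v\rangle = \mathrm{tr}(BT) + y_1 t_1 + y_2 t_2$. Then for each nonzero $t \in \mathcal{O}$, the integral $\int_{M_2(\mathcal{O}) \times \mathcal{O}^2} \psi\big((x P(b,v) + \langle \alpha, v\rangle)/t\big)\, dv$ vanishes unless $\alpha \in M_2(\mathcal{O}) \times \mathcal{O}^2$, in which case it equals $|t|^3 \, \psi\big(-P(b^{-1},\alpha)/(x t)\big)$, where $P(b^{-1}, \alpha) = b^{-1} \det B - y_1 y_2$. -/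

import Mathlib

open MeasureTheory NNReal ENNReal

set_option linter.unusedSectionVars false
set_option linter.unusedVariables false

noncomputable section
namespace TwistedGaussianAux
section S1
variable {p : ℕ} [Fact p.Prime]

lemma hp1 : (1:ℝ) < p := by exact_mod_cast (Fact.out : p.Prime).one_lt

lemma norm_ge_p {z : ℚ_[p]} (h : 1 < ‖z‖) : (p:ℝ) ≤ ‖z‖ := by
  have hz : z ≠ 0 := by rintro rfl; simp at h; linarith
  rw [Padic.norm_eq_zpow_neg_valuation hz] at h ⊢
  have h1 : (1:ℝ) < p := hp1
  have hv : 1 ≤ -z.valuation := by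
    by_contra hcon
    push_neg at hcon
    have : -z.valuation ≤ 0 := by omega
    have := zpow_le_one_of_nonpos₀ h1.le this
    linarith
  calc (p:ℝ) = p ^ (1:ℤ) := by norm_num
  _ ≤ p ^ (-z.valuation) := by
      apply zpow_le_zpow_right₀ h1.le hv

lemma exists_pow_norm {t : ℚ_[p]} (ht : t ≠ 0) (ht1 : ‖t‖ ≤ 1) :
    ∃ n : ℕ, ‖t‖ = (p:ℝ) ^ (-(n:ℤ)) := by
  have h1 : (1:ℝ) < p := hp1
  rw [Padic.norm_eq_zpow_neg_valuation ht] at ht1 ⊢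
  have hv : 0 ≤ t.valuation := by
    by_contra hcon
    push_neg at hcon
    have : 1 ≤ -t.valuation := by omega
    have : (p:ℝ)^(1:ℤ) ≤ p ^ (-t.valuation) := zpow_le_zpow_right₀ h1.le this
    simp only [zpow_one] at this
    linarith
  exact ⟨t.valuation.toNat, by rw [Int.toNat_of_nonneg hv]⟩

lemma exists_approx (w : ℚ_[p]) (hw : ‖w‖ ≤ 1) : ∃ j : ℕ, j < p ∧ ‖w - (j:ℚ_[p])‖ ≤ (p:ℝ)⁻¹ := by
  set z : ℤ_[p] := ⟨w, hw⟩ with hz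
  refine ⟨z.appr 1, by simpa using z.appr_lt 1, ?_⟩
  have h := (PadicInt.norm_le_pow_iff_mem_span_pow (z - (z.appr 1 : ℤ_[p])) 1).2 (z.appr_spec 1)
  have hco : ((z - (z.appr 1 : ℤ_[p]) : ℤ_[p]) : ℚ_[p]) = w - (z.appr 1 : ℚ_[p]) := by
    push_cast [hz]
    rfl
  rw [PadicInt.norm_def, hco] at h
  simpa using h
end S1

section S2
variable {p : ℕ} [Fact p.Prime] {ψ : AddChar ℚ_[p] ℂ} (hψ₁ : ∀ x : ℚ_[p], ‖x‖ ≤ 1 → ψ x = 1)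

include hψ₁

lemma psi_norm (y : ℚ_[p]) : ‖ψ y‖ = 1 := by
  rcases eq_or_ne y 0 with rfl | hy
  · simp
  · set n : ℕ := y.valuation.natAbs with hn
    have hle : ‖(p:ℚ_[p])^n * y‖ ≤ 1 := by
      rw [norm_mul, norm_pow, Padic.norm_p, Padic.norm_eq_zpow_neg_valuation hy]
      rw [inv_pow, ← zpow_natCast, ← zpow_neg, ← zpow_add₀ (by exact_mod_cast (Fact.out : p.Prime).pos.ne' : ((p:ℝ)) ≠ 0)]
      apply zpow_le_one_of_nonpos₀
      · exact_mod_cast (Fact.out : p.Prime).one_lt.le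
      · have : (n:ℤ) = |y.valuation| := Int.abs_eq_natAbs y.valuation ▸ rfl
        have h2 := neg_abs_le y.valuation
        omega
    have hpow : ψ y ^ (p^n) = 1 := by
      rw [← AddChar.map_nsmul_eq_pow, nsmul_eq_mul]
      apply hψ₁
      push_cast
      exact hle
    have hk : (p^n : ℕ) ≠ 0 := (pow_pos (Fact.out : p.Prime).pos n).ne'
    have hnn : ‖ψ y‖₊ ^ (p^n) = 1 := by
      rw [← nnnorm_pow, hpow]; simp
    have := (pow_eq_one_iff.1 hnn).resolve_right hk
    calc ‖ψ y‖ = ((‖ψ y‖₊ : ℝ)) := rfl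
    _ = 1 := by rw [this]; simp

lemma psi_cont : Continuous ψ := by
  rw [continuous_iff_continuousAt]
  intro x
  apply Filter.EventuallyEq.continuousAt (y := ψ x)
  filter_upwards [Metric.closedBall_mem_nhds x one_pos] with y hy
  have : ‖y - x‖ ≤ 1 := by rwa [← dist_eq_norm, ← Metric.mem_closedBall]
  calc ψ y = ψ (x + (y - x)) := by ring_nf
  _ = ψ x * ψ (y - x) := ψ.map_add_eq_mul _ _
  _ = ψ x := by rw [hψ₁ _ this, mul_one]

lemma psi_integrable {X : Type*} [MeasurableSpace X] [TopologicalSpace X]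
    [OpensMeasurableSpace X] (m : Measure X) [IsFiniteMeasure m] {g : X → ℚ_[p]}
    (hg : Continuous g) : Integrable (fun x => ψ (g x)) m :=
  ⟨((psi_cont hψ₁).comp hg).aestronglyMeasurable,
    HasFiniteIntegral.of_bounded (C := 1) (Filter.Eventually.of_forall fun x => (psi_norm hψ₁ _).le)⟩

end S2

section S3
variable {p : ℕ} [Fact p.Prime] {ψ : AddChar ℚ_[p] ℂ} (hψ₁ : ∀ x : ℚ_[p], ‖x‖ ≤ 1 → ψ x = 1)
variable [MeasurableSpace ℚ_[p]] [BorelSpace ℚ_[p]] {μ : Measure ℚ_[p]} [μ.IsAddHaarMeasure]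

lemma measurableSetB : MeasurableSet {x : ℚ_[p] | ‖x‖ ≤ 1} :=
  (isClosed_le continuous_norm continuous_const).measurableSet

include hψ₁ in
lemma char_integral (hμ : μ {x : ℚ_[p] | ‖x‖ ≤ 1} = 1)
    (hψ₂ : ∃ x₀ : ℚ_[p], ‖x₀‖ ≤ p ∧ ψ x₀ ≠ 1) (z : ℚ_[p]) :
    ∫ u in {x : ℚ_[p] | ‖x‖ ≤ 1}, ψ (u * z) ∂μ = if ‖z‖ ≤ 1 then 1 else 0 := by
  have hB : MeasurableSet {x : ℚ_[p] | ‖x‖ ≤ 1} := measurableSetB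
  have tri : ∀ a b : ℚ_[p], ‖a + b‖ ≤ max ‖a‖ ‖b‖ := Padic.nonarchimedean
  split_ifs with h
  · have : ∫ u in {x : ℚ_[p] | ‖x‖ ≤ 1}, ψ (u * z) ∂μ
        = ∫ _ in {x : ℚ_[p] | ‖x‖ ≤ 1}, (1:ℂ) ∂μ := by
      apply setIntegral_congr_fun hB
      intro u hu
      apply hψ₁
      calc ‖u * z‖ = ‖u‖ * ‖z‖ := norm_mul _ _
      _ ≤ 1 := mul_le_one₀ hu (norm_nonneg _) h
    rw [this, setIntegral_const]
    simp [Measure.real, hμ]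
  · push_neg at h
    obtain ⟨x₀, hx₀p, hx₀ne⟩ := hψ₂
    have hx₀gt : 1 < ‖x₀‖ := lt_of_not_ge fun hle => hx₀ne (hψ₁ _ hle)
    have hz0 : z ≠ 0 := by
      rintro rfl; simp at h; linarith
    set u₀ : ℚ_[p] := x₀ / z with hu₀
    have hzpos : (0:ℝ) < ‖z‖ := lt_trans one_pos h
    have hu₀le : ‖u₀‖ ≤ 1 := by
      rw [hu₀, norm_div, div_le_one hzpos]
      exact hx₀p.trans (norm_ge_p h)
    have hME : MeasurableEmbedding (fun u : ℚ_[p] => u + u₀) :=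
      (MeasurableEquiv.addRight u₀).measurableEmbedding
    have hpre : (fun u : ℚ_[p] => u + u₀) ⁻¹' {x | ‖x‖ ≤ 1} = {x : ℚ_[p] | ‖x‖ ≤ 1} := by
      ext u
      simp only [Set.mem_preimage, Set.mem_setOf_eq]
      constructor
      · intro hu
        calc ‖u‖ = ‖(u + u₀) + (-u₀)‖ := by ring_nf
        _ ≤ max ‖u + u₀‖ ‖-u₀‖ := tri _ _
        _ ≤ 1 := max_le (by simpa using hu) (by simpa using hu₀le)
      · intro hu
        calc ‖u + u₀‖ ≤ max ‖u‖ ‖u₀‖ := tri _ _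
        _ ≤ 1 := max_le hu hu₀le
    have hkey : ∫ u in {x : ℚ_[p] | ‖x‖ ≤ 1}, ψ (u * z) ∂μ
        = ψ x₀ * ∫ u in {x : ℚ_[p] | ‖x‖ ≤ 1}, ψ (u * z) ∂μ := by
      conv_lhs => rw [← (measurePreserving_add_right μ u₀).setIntegral_preimage_emb hME
        (fun u => ψ (u * z)) {x : ℚ_[p] | ‖x‖ ≤ 1}]
      rw [hpre]
      have heq : ∀ u ∈ {x : ℚ_[p] | ‖x‖ ≤ 1}, ψ ((u + u₀) * z) = ψ x₀ * ψ (u * z) := by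
        intro u _
        rw [add_mul, ψ.map_add_eq_mul, hu₀, div_mul_cancel₀ _ hz0, mul_comm]
      rw [setIntegral_congr_fun hB heq, integral_const_mul]
    have h0 : (1 - ψ x₀) * ∫ u in {x : ℚ_[p] | ‖x‖ ≤ 1}, ψ (u * z) ∂μ = 0 := by
      linear_combination hkey
    rcases mul_eq_zero.1 h0 with h1 | h2
    · exact absurd (sub_eq_zero.1 h1).symm hx₀ne
    · exact h2
end S3

section S4
variable {p : ℕ} [Fact p.Prime]
variable [MeasurableSpace ℚ_[p]] [BorelSpace ℚ_[p]] {μ : Measure ℚ_[p]} [μ.IsAddHaarMeasure]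

lemma ball_meas (hμ : μ {x : ℚ_[p] | ‖x‖ ≤ 1} = 1) (n : ℕ) :
    μ {w : ℚ_[p] | ‖w‖ ≤ (p:ℝ) ^ (-(n:ℤ))} = ENNReal.ofReal ((p:ℝ) ^ (-(n:ℤ))) := by
  induction n with
  | zero => simpa using hμ
  | succ n ih =>
    have hprime : p.Prime := Fact.out
    have hp0 : (0:ℝ) < p := by exact_mod_cast hprime.pos
    have hp1 : (1:ℝ) < p := by exact_mod_cast hprime.one_lt
    set r : ℝ := (p:ℝ) ^ (-(n:ℤ)) with hr
    set r' : ℝ := (p:ℝ) ^ (-((n:ℕ)+1:ℕ):ℤ) with hr'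
    have hrpos : 0 < r := by positivity
    have hr'r : r' = r * (p:ℝ)⁻¹ := by
      rw [hr', hr, ← zpow_neg_one, ← zpow_add₀ hp0.ne']
      congr 1
      push_cast
      ring
    have hr'pos : 0 < r' := by rw [hr'r]; positivity
    have hr'lt : r' < r := by
      rw [hr'r]
      nlinarith [inv_lt_one_of_one_lt₀ hp1]
    have hpn : ‖((p:ℚ_[p]))^n‖ = r := by
      rw [norm_pow, Padic.norm_p, hr, inv_pow, ← zpow_natCast, ← zpow_neg]
    have hpn0 : ((p:ℚ_[p]))^n ≠ 0 := by
      intro h0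
      rw [h0] at hpn
      simp at hpn
      linarith [hpn ▸ hrpos]
    set C : Fin p → Set ℚ_[p] :=
      fun j => (fun w => w + (-((j:ℕ):ℚ_[p]) * ((p:ℚ_[p]))^n)) ⁻¹' {w : ℚ_[p] | ‖w‖ ≤ r'} with hC
    have hCmem : ∀ (j : Fin p) (w : ℚ_[p]), w ∈ C j ↔ ‖w - ((j:ℕ):ℚ_[p]) * ((p:ℚ_[p]))^n‖ ≤ r' := by
      intro j w
      simp only [hC, Set.mem_preimage, Set.mem_setOf_eq, ← sub_eq_add_neg]
      constructor <;> intro h <;> [skip; skip] <;>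
        · convert h using 2
          ring
    have hCj : ∀ j : Fin p, ‖((j:ℕ):ℚ_[p]) * ((p:ℚ_[p]))^n‖ ≤ r := by
      intro j
      rw [norm_mul, hpn]
      have : ‖((j:ℕ):ℚ_[p])‖ ≤ 1 := by
        have := Padic.norm_int_le_one (p := p) ((j:ℕ):ℤ)
        push_cast at this
        exact this
      nlinarith
    have tri : ∀ a b : ℚ_[p], ‖a + b‖ ≤ max ‖a‖ ‖b‖ := Padic.nonarchimedean
    -- covering
    have hcover : {w : ℚ_[p] | ‖w‖ ≤ r} = ⋃ j : Fin p, C j := by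
      apply Set.Subset.antisymm
      · intro w hw
        obtain ⟨j, hjp, hj⟩ := exists_approx (w / ((p:ℚ_[p]))^n)
          (by rw [norm_div, hpn, div_le_one hrpos]; exact hw)
        refine Set.mem_iUnion.2 ⟨⟨j, hjp⟩, ?_⟩
        rw [hCmem]
        have : w - ((j:ℕ):ℚ_[p]) * ((p:ℚ_[p]))^n = ((p:ℚ_[p]))^n * (w / ((p:ℚ_[p]))^n - (j:ℚ_[p])) := by
          field_simp
        rw [this, norm_mul, hpn, hr'r]
        exact mul_le_mul_of_nonneg_left (by simpa using hj) hrpos.le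
      · intro w hw
        obtain ⟨j, hj⟩ := Set.mem_iUnion.1 hw
        rw [hCmem] at hj
        show ‖w‖ ≤ r
        calc ‖w‖ = ‖(w - ((j:ℕ):ℚ_[p]) * ((p:ℚ_[p]))^n) + ((j:ℕ):ℚ_[p]) * ((p:ℚ_[p]))^n‖ := by ring_nf
        _ ≤ max ‖w - ((j:ℕ):ℚ_[p]) * ((p:ℚ_[p]))^n‖ ‖((j:ℕ):ℚ_[p]) * ((p:ℚ_[p]))^n‖ := tri _ _
        _ ≤ r := max_le (hj.trans hr'lt.le) (hCj j)
    -- disjointness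
    have hdisj : Pairwise (Function.onFun Disjoint C) := by
      intro j k hjk
      rw [Function.onFun, Set.disjoint_left]
      intro w hwj hwk
      rw [hCmem] at hwj hwk
      have hd : ‖(((j:ℕ):ℚ_[p]) - ((k:ℕ):ℚ_[p])) * ((p:ℚ_[p]))^n‖ ≤ r' := by
        have : (((j:ℕ):ℚ_[p]) - ((k:ℕ):ℚ_[p])) * ((p:ℚ_[p]))^n
            = (w - ((k:ℕ):ℚ_[p]) * ((p:ℚ_[p]))^n) + (-(w - ((j:ℕ):ℚ_[p]) * ((p:ℚ_[p]))^n)) := by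
          ring
        rw [this]
        exact le_trans (tri _ _) (max_le hwk (by rwa [norm_neg]))
      have hnorm1 : ‖(((j:ℕ):ℚ_[p]) - ((k:ℕ):ℚ_[p]))‖ = 1 := by
        have hint : (((j:ℕ):ℚ_[p]) - ((k:ℕ):ℚ_[p])) = (((j:ℕ) - (k:ℕ) : ℤ) : ℚ_[p]) := by push_cast; ring
        rw [hint]
        have hne : ((j:ℕ) - (k:ℕ) : ℤ) ≠ 0 := by
          have : (j:ℕ) ≠ (k:ℕ) := fun h => hjk (Fin.ext h)
          omega
        have hnd : ¬ ((p:ℤ) ∣ ((j:ℕ) - (k:ℕ) : ℤ)) := by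
          intro hdvd
          have habs : |((j:ℕ) - (k:ℕ) : ℤ)| < (p:ℤ) := by
            rw [abs_lt]; have := j.2; have := k.2; omega
          exact hne (Int.eq_zero_of_abs_lt_dvd hdvd habs)
        have hlt := (Padic.norm_intCast_lt_one_iff (p := p) (k := ((j:ℕ) - (k:ℕ) : ℤ)))
        have hle1 := Padic.norm_int_le_one (p := p) ((j:ℕ) - (k:ℕ) : ℤ)
        rcases lt_or_eq_of_le hle1 with hlt1 | he
        · exact absurd (hlt.1 hlt1) hnd
        · exact he
      rw [norm_mul, hnorm1, one_mul, hpn] at hd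
      linarith
    have hCmeas : ∀ j : Fin p, MeasurableSet (C j) := by
      intro j
      exact (isClosed_le continuous_norm continuous_const).measurableSet.preimage
        (measurable_id.add_const _)
    have hCμ : ∀ j : Fin p, μ (C j) = μ {w : ℚ_[p] | ‖w‖ ≤ r'} := by
      intro j
      exact measure_preimage_add_right μ _ _
    have hsum : μ {w : ℚ_[p] | ‖w‖ ≤ r} = (p : ℝ≥0∞) * μ {w : ℚ_[p] | ‖w‖ ≤ r'} := by
      rw [hcover, measure_iUnion hdisj hCmeas]
      rw [tsum_fintype]
      simp only [hCμ]
      rw [Finset.sum_const, Finset.card_univ, Fintype.card_fin, nsmul_eq_mul]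
    rw [ih] at hsum
    have hfin : (p : ℝ≥0∞) ≠ 0 := by exact_mod_cast hprime.pos.ne'
    have hfin2 : (p : ℝ≥0∞) ≠ ⊤ := ENNReal.natCast_ne_top p
    have : (p : ℝ≥0∞) * μ {w : ℚ_[p] | ‖w‖ ≤ r'} = (p : ℝ≥0∞) * ENNReal.ofReal r' := by
      rw [← hsum]
      have : (p : ℝ≥0∞) * ENNReal.ofReal r' = ENNReal.ofReal ((p:ℝ) * r') := by
        rw [ENNReal.ofReal_mul hp0.le]
        congr 1
        simp [ENNReal.ofReal_natCast]
      rw [this]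
      congr 1
      rw [hr'r]
      field_simp
    exact (ENNReal.mul_right_inj hfin hfin2).1 this

lemma ball_meas_t (hμ : μ {x : ℚ_[p] | ‖x‖ ≤ 1} = 1) {t : ℚ_[p]} (ht : t ≠ 0) (ht1 : ‖t‖ ≤ 1)
    (w₀ : ℚ_[p]) :
    μ {w : ℚ_[p] | ‖w + w₀‖ ≤ ‖t‖} = ENNReal.ofReal ‖t‖ := by
  obtain ⟨n, hn⟩ : ∃ n : ℕ, ‖t‖ = (p:ℝ) ^ (-(n:ℤ)) := exists_pow_norm ht ht1
  have : {w : ℚ_[p] | ‖w + w₀‖ ≤ ‖t‖}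
      = (fun w => w + w₀) ⁻¹' {w : ℚ_[p] | ‖w‖ ≤ (p:ℝ) ^ (-(n:ℤ))} := by
    ext w; simp [hn]
  rw [this, measure_preimage_add_right, ball_meas hμ n, hn]
end S4

section S5
variable {p : ℕ} [Fact p.Prime] {ψ : AddChar ℚ_[p] ℂ}
variable [MeasurableSpace ℚ_[p]] [BorelSpace ℚ_[p]] {μ : Measure ℚ_[p]} [μ.IsAddHaarMeasure]

lemma two_dim (hψ₁ : ∀ x : ℚ_[p], ‖x‖ ≤ 1 → ψ x = 1)
    (hψ₂ : ∃ x₀ : ℚ_[p], ‖x₀‖ ≤ p ∧ ψ x₀ ≠ 1)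
    (hμ : μ {x : ℚ_[p] | ‖x‖ ≤ 1} = 1)
    {t : ℚ_[p]} (ht : t ≠ 0) (ht1 : ‖t‖ ≤ 1)
    (c a d : ℚ_[p]) (hc : ‖c‖ = 1) :
    ∫ z, ψ ((c * z.2 * z.1 + a * z.2 + d * z.1) / t)
      ∂((μ.restrict {x : ℚ_[p] | ‖x‖ ≤ 1}).prod (μ.restrict {x : ℚ_[p] | ‖x‖ ≤ 1})) =
    if ‖a‖ ≤ 1 ∧ ‖d‖ ≤ 1 then (‖t‖ : ℂ) * ψ (-(a * d) / (c * t)) else 0 := by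
  have hB : MeasurableSet {x : ℚ_[p] | ‖x‖ ≤ 1} :=
    (isClosed_le continuous_norm continuous_const).measurableSet
  have tri : ∀ a b : ℚ_[p], ‖a + b‖ ≤ max ‖a‖ ‖b‖ := Padic.nonarchimedean
  have hc0 : c ≠ 0 := by intro h; rw [h] at hc; simp at hc
  have htpos : (0:ℝ) < ‖t‖ := norm_pos_iff.2 ht
  haveI : IsFiniteMeasure (μ.restrict {x : ℚ_[p] | ‖x‖ ≤ 1}) := by
    constructor
    rw [Measure.restrict_apply_univ, hμ]
    exact one_lt_top
  -- Fubini
  rw [integral_prod _ (psi_integrable hψ₁ _ (by fun_prop))]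
  -- inner integral
  have hinner : ∀ w : ℚ_[p],
      (∫ u, ψ ((c * u * w + a * u + d * w) / t) ∂(μ.restrict {x : ℚ_[p] | ‖x‖ ≤ 1}))
      = (if ‖(c * w + a) / t‖ ≤ 1 then 1 else 0) * ψ (d * w / t) := by
    intro w
    have hsplit : ∀ u : ℚ_[p], (c * u * w + a * u + d * w) / t
        = u * ((c * w + a) / t) + d * w / t := by
      intro u; field_simp
    calc (∫ u, ψ ((c * u * w + a * u + d * w) / t) ∂(μ.restrict {x : ℚ_[p] | ‖x‖ ≤ 1}))
        = ∫ u, ψ (u * ((c * w + a) / t)) * ψ (d * w / t)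
            ∂(μ.restrict {x : ℚ_[p] | ‖x‖ ≤ 1}) := by
          congr 1; funext u; rw [hsplit u, ψ.map_add_eq_mul]
    _ = (∫ u in {x : ℚ_[p] | ‖x‖ ≤ 1}, ψ (u * ((c * w + a) / t)) ∂μ) * ψ (d * w / t) :=
          integral_mul_const _ _
    _ = (if ‖(c * w + a) / t‖ ≤ 1 then 1 else 0) * ψ (d * w / t) := by
          rw [char_integral hψ₁ hμ hψ₂]
  simp only [hinner]
  -- rewrite the condition as membership in a ball
  have hcond : ∀ w : ℚ_[p], (‖(c * w + a) / t‖ ≤ 1) ↔ ‖w + a / c‖ ≤ ‖t‖ := by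
    intro w
    rw [norm_div, div_le_one htpos]
    have : c * w + a = c * (w + a / c) := by field_simp
    rw [this, norm_mul, hc, one_mul]
  by_cases ha : ‖a‖ ≤ 1
  · -- a is integral
    have hac : ‖a / c‖ = ‖a‖ := by rw [norm_div, hc, div_one]
    set S : Set ℚ_[p] := {w : ℚ_[p] | ‖w + a / c‖ ≤ ‖t‖} with hS
    have hSmeas : MeasurableSet S :=
      ((isClosed_le (by fun_prop) continuous_const).measurableSet)
    have hSsub : S ⊆ {x : ℚ_[p] | ‖x‖ ≤ 1} := by
      intro w hw
      show ‖w‖ ≤ 1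
      calc ‖w‖ = ‖(w + a / c) + (-(a / c))‖ := by ring_nf
      _ ≤ max ‖w + a / c‖ ‖-(a / c)‖ := tri _ _
      _ ≤ 1 := max_le (le_trans hw ht1) (by rw [norm_neg, hac]; exact ha)
    have hstep : (∫ w in {x : ℚ_[p] | ‖x‖ ≤ 1},
        (if ‖(c * w + a) / t‖ ≤ 1 then (1:ℂ) else 0) * ψ (d * w / t) ∂μ)
        = ∫ w in S, ψ (d * w / t) ∂μ := by
      have : ∀ w : ℚ_[p], (if ‖(c * w + a) / t‖ ≤ 1 then (1:ℂ) else 0) * ψ (d * w / t)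
          = S.indicator (fun w => ψ (d * w / t)) w := by
        intro w
        rw [Set.indicator_apply]
        by_cases hw : w ∈ S
        · rw [if_pos hw, if_pos ((hcond w).2 hw), one_mul]
        · rw [if_neg hw, if_neg (fun hcc => hw ((hcond w).1 hcc)), zero_mul]
      simp only [this]
      rw [setIntegral_indicator hSmeas, Set.inter_eq_self_of_subset_right hSsub]
    rw [hstep]
    by_cases hd : ‖d‖ ≤ 1
    · -- both integral: constant on S
      rw [if_pos ⟨ha, hd⟩]
      have hconst : ∀ w ∈ S, ψ (d * w / t) = ψ (-(a * d) / (c * t)) := by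
        intro w hw
        have hid : d * w / t = -(a * d) / (c * t) + d * (w + a / c) / t := by
          field_simp; ring
        rw [hid, ψ.map_add_eq_mul, hψ₁ (d * (w + a / c) / t) ?_, mul_one]
        rw [norm_div, norm_mul]
        rw [div_le_one htpos]
        calc ‖d‖ * ‖w + a / c‖ ≤ 1 * ‖t‖ := by
              apply mul_le_mul hd hw (norm_nonneg _) zero_le_one
        _ = ‖t‖ := one_mul _
      rw [setIntegral_congr_fun hSmeas hconst, setIntegral_const]
      rw [Measure.real, ball_meas_t hμ ht ht1 (a / c), ENNReal.toReal_ofReal htpos.le]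
      rw [Complex.real_smul]
    · -- d not integral: translation trick gives 0
      rw [if_neg (fun hcc => hd hcc.2)]
      obtain ⟨x₀, hx₀p, hx₀ne⟩ := hψ₂
      have hd1 : 1 < ‖d‖ := lt_of_not_ge hd
      have hd0 : d ≠ 0 := by intro h; rw [h] at hd1; simp at hd1; linarith
      set w₁ : ℚ_[p] := t * x₀ / d with hw₁
      have hw₁le : ‖w₁‖ ≤ ‖t‖ := by
        rw [hw₁, norm_div, norm_mul, div_le_iff₀ (lt_trans one_pos hd1)]
        calc ‖t‖ * ‖x₀‖ ≤ ‖t‖ * ‖d‖ := by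
              apply mul_le_mul_of_nonneg_left (hx₀p.trans (norm_ge_p hd1)) htpos.le
        _ = ‖t‖ * ‖d‖ := rfl
      have hME : MeasurableEmbedding (fun u : ℚ_[p] => u + w₁) :=
        (MeasurableEquiv.addRight w₁).measurableEmbedding
      have hpre : (fun u : ℚ_[p] => u + w₁) ⁻¹' S = S := by
        ext w
        simp only [Set.mem_preimage, hS, Set.mem_setOf_eq]
        constructor
        · intro hw
          calc ‖w + a / c‖ = ‖((w + w₁) + a / c) + (-w₁)‖ := by ring_nf
          _ ≤ max ‖(w + w₁) + a / c‖ ‖-w₁‖ := tri _ _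
          _ ≤ ‖t‖ := max_le hw (by rwa [norm_neg])
        · intro hw
          calc ‖(w + w₁) + a / c‖ = ‖(w + a / c) + w₁‖ := by ring_nf
          _ ≤ max ‖w + a / c‖ ‖w₁‖ := tri _ _
          _ ≤ ‖t‖ := max_le hw hw₁le
      have hkey : ∫ w in S, ψ (d * w / t) ∂μ = ψ x₀ * ∫ w in S, ψ (d * w / t) ∂μ := by
        conv_lhs => rw [← (measurePreserving_add_right μ w₁).setIntegral_preimage_emb hME
          (fun w => ψ (d * w / t)) S]
        rw [hpre]
        have heq : ∀ w ∈ S, ψ (d * (w + w₁) / t) = ψ x₀ * ψ (d * w / t) := by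
          intro w _
          have : d * (w + w₁) / t = d * w / t + x₀ := by
            rw [hw₁]; field_simp
          rw [this, ψ.map_add_eq_mul, mul_comm]
        rw [setIntegral_congr_fun hSmeas heq, integral_const_mul]
      have h0 : (1 - ψ x₀) * ∫ w in S, ψ (d * w / t) ∂μ = 0 := by linear_combination hkey
      rcases mul_eq_zero.1 h0 with h1 | h2
      · exact absurd (sub_eq_zero.1 h1).symm hx₀ne
      · exact h2
  · -- a not integral : inner condition always fails on B
    rw [if_neg (fun hcc => ha hcc.1)]
    have hzero : ∀ w ∈ {x : ℚ_[p] | ‖x‖ ≤ 1},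
        (if ‖(c * w + a) / t‖ ≤ 1 then (1:ℂ) else 0) * ψ (d * w / t) = 0 := by
      intro w hw
      rw [if_neg, zero_mul]
      rw [hcond]
      have hac : ‖a / c‖ = ‖a‖ := by rw [norm_div, hc, div_one]
      have ha1 : 1 < ‖a‖ := lt_of_not_ge ha
      have hne : ‖w‖ ≠ ‖a / c‖ := by
        rw [hac]; exact ne_of_lt (lt_of_le_of_lt hw ha1)
      rw [Padic.add_eq_max_of_ne hne]
      intro hcc
      have : ‖a / c‖ ≤ ‖t‖ := le_trans (le_max_right _ _) hcc
      rw [hac] at this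
      linarith [le_trans this ht1]
    rw [setIntegral_congr_fun hB hzero]
    simp
end S5

section S6
variable {p : ℕ} [Fact p.Prime]
variable [MeasurableSpace ℚ_[p]] [BorelSpace ℚ_[p]]

lemma pi_restrict (μ : Measure ℚ_[p]) [SigmaFinite μ] {B : Set ℚ_[p]} (hB : MeasurableSet B) :
    Measure.pi (fun _ : Fin 6 => μ.restrict B)
      = (Measure.pi fun _ : Fin 6 => μ).restrict (Set.pi Set.univ fun _ => B) := by
  refine Measure.pi_eq fun s hs => ?_
  rw [Measure.restrict_apply (MeasurableSet.univ_pi hs)]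
  have : (Set.pi Set.univ s) ∩ (Set.pi Set.univ fun _ => B)
      = Set.pi Set.univ (fun i => s i ∩ B) := by
    ext v
    simp only [Set.mem_inter_iff, Set.mem_univ_pi, Set.mem_inter_iff]
    exact ⟨fun ⟨h1, h2⟩ i => ⟨h1 i, h2 i⟩, fun h => ⟨fun i => (h i).1, fun i => (h i).2⟩⟩
  rw [this, Measure.pi_pi]
  exact Finset.prod_congr rfl fun i _ => (Measure.restrict_apply (hs i)).symm

def Phi : ((ℚ_[p] × ℚ_[p]) × (ℚ_[p] × ℚ_[p]) × (ℚ_[p] × ℚ_[p])) → (Fin 6 → ℚ_[p]) :=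
  fun z => ![z.1.1, z.2.1.1, z.2.1.2, z.1.2, z.2.2.1, z.2.2.2]

lemma Phi_measurable : Measurable (Phi (p := p)) := by
  rw [measurable_pi_iff]
  intro i
  fin_cases i
  exacts [measurable_fst.fst, measurable_snd.fst.fst, measurable_snd.fst.snd,
    measurable_fst.snd, measurable_snd.snd.fst, measurable_snd.snd.snd]

lemma Phi_measurePreserving (ν : Measure ℚ_[p]) [SigmaFinite ν] :
    MeasurePreserving (Phi (p := p)) ((ν.prod ν).prod ((ν.prod ν).prod (ν.prod ν)))
      (Measure.pi fun _ : Fin 6 => ν) := by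
  refine ⟨Phi_measurable, ?_⟩
  refine (Measure.pi_eq fun s hs => ?_).symm
  rw [Measure.map_apply Phi_measurable (MeasurableSet.univ_pi hs)]
  have hpre : Phi ⁻¹' (Set.pi Set.univ s)
      = (s 0 ×ˢ s 3) ×ˢ ((s 1 ×ˢ s 2) ×ˢ (s 4 ×ˢ s 5)) := by
    ext z
    simp only [Set.mem_preimage, Set.mem_univ_pi, Set.mem_prod]
    constructor
    · intro h
      exact ⟨⟨h 0, h 3⟩, ⟨h 1, h 2⟩, h 4, h 5⟩
    · rintro ⟨⟨h0, h3⟩, ⟨h1, h2⟩, h4, h5⟩ i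
      fin_cases i
      exacts [h0, h1, h2, h3, h4, h5]
  rw [hpre]
  simp only [Measure.prod_prod]
  rw [Fin.prod_univ_six]
  ring
end S6

end TwistedGaussianAux
end

open TwistedGaussianAux in
set_option maxHeartbeats 1000000 in
/-- Lemma 4.2 of the paper (the twisted Gaussian integral): over `ℚ_p` with `p` odd, with
`ψ` of conductor `ℤ_p`, `b, x` units, `P(b,v) = b(v₀v₃ - v₁v₂) - v₄v₅` and
`⟨α,v⟩ = ∑ αᵢvᵢ`, the integral `∫_{ℤ_p⁶} ψ((x P(b,v) + ⟨α,v⟩)/t) dv` vanishes unless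
`α ∈ ℤ_p⁶`, in which case it equals `|t|³ ψ(-P(b⁻¹,α)/(xt))`. -/
theorem twisted_gaussian_integral_padic (p : ℕ) [Fact p.Prime] (hp : p ≠ 2)
    [MeasurableSpace ℚ_[p]] [BorelSpace ℚ_[p]]
    (μ : Measure ℚ_[p]) [μ.IsAddHaarMeasure] [SigmaFinite μ]
    (hμ : μ {x : ℚ_[p] | ‖x‖ ≤ 1} = 1)
    (ψ : AddChar ℚ_[p] ℂ) (hψ₁ : ∀ x : ℚ_[p], ‖x‖ ≤ 1 → ψ x = 1)
    (hψ₂ : ∃ x : ℚ_[p], ‖x‖ ≤ p ∧ ψ x ≠ 1)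
    (b x : ℚ_[p]) (hb : ‖b‖ = 1) (hx : ‖x‖ = 1)
    (α : Fin 6 → ℚ_[p]) (t : ℚ_[p]) (ht : t ≠ 0) (ht1 : ‖t‖ ≤ 1) :
    ∫ v in {v : Fin 6 → ℚ_[p] | ∀ i, ‖v i‖ ≤ 1},
        ψ ((x * (b * (v 0 * v 3 - v 1 * v 2) - v 4 * v 5) + ∑ i, α i * v i) / t)
        ∂(Measure.pi fun _ : Fin 6 => μ) =
      if ∀ i, ‖α i‖ ≤ 1 then
        ((‖t‖ : ℂ)) ^ 3 * ψ (-((b⁻¹ * (α 0 * α 3 - α 1 * α 2) - α 4 * α 5) / (x * t)))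
      else 0 := by
  have hB : MeasurableSet {x : ℚ_[p] | ‖x‖ ≤ 1} :=
    (isClosed_le continuous_norm continuous_const).measurableSet
  haveI : IsFiniteMeasure (μ.restrict {x : ℚ_[p] | ‖x‖ ≤ 1}) := by
    constructor
    rw [Measure.restrict_apply_univ, hμ]
    exact ENNReal.one_lt_top
  have hx0 : x ≠ 0 := by intro h; rw [h] at hx; simp at hx
  have hb0 : b ≠ 0 := by intro h; rw [h] at hb; simp at hb
  simp only [Fin.sum_univ_six]
  have hset : {v : Fin 6 → ℚ_[p] | ∀ i, ‖v i‖ ≤ 1}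
      = Set.pi Set.univ (fun _ : Fin 6 => {x : ℚ_[p] | ‖x‖ ≤ 1}) := by
    ext v
    simp [Set.mem_univ_pi]
  rw [hset, ← pi_restrict μ hB]
  have hΦ := Phi_measurePreserving (μ.restrict {x : ℚ_[p] | ‖x‖ ≤ 1})
  have hFc : Continuous (fun v : Fin 6 → ℚ_[p] =>
      ψ ((x * (b * (v 0 * v 3 - v 1 * v 2) - v 4 * v 5) +
        (α 0 * v 0 + α 1 * v 1 + α 2 * v 2 + α 3 * v 3 + α 4 * v 4 + α 5 * v 5)) / t)) := by
    apply (psi_cont hψ₁).comp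
    fun_prop
  rw [← hΦ.map_eq, integral_map hΦ.measurable.aemeasurable hFc.aestronglyMeasurable]
  have hfact : ∀ z : ((ℚ_[p] × ℚ_[p]) × (ℚ_[p] × ℚ_[p]) × (ℚ_[p] × ℚ_[p])),
      ψ ((x * (b * (Phi z 0 * Phi z 3 - Phi z 1 * Phi z 2) - Phi z 4 * Phi z 5)
        + (α 0 * Phi z 0 + α 1 * Phi z 1 + α 2 * Phi z 2 + α 3 * Phi z 3
          + α 4 * Phi z 4 + α 5 * Phi z 5)) / t)
      = ψ ((x * b * z.1.2 * z.1.1 + α 3 * z.1.2 + α 0 * z.1.1) / t)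
        * (ψ ((-(x * b) * z.2.1.2 * z.2.1.1 + α 2 * z.2.1.2 + α 1 * z.2.1.1) / t)
          * ψ ((-x * z.2.2.2 * z.2.2.1 + α 5 * z.2.2.2 + α 4 * z.2.2.1) / t)) := by
    intro z
    show ψ ((x * (b * (z.1.1 * z.1.2 - z.2.1.1 * z.2.1.2) - z.2.2.1 * z.2.2.2)
        + (α 0 * z.1.1 + α 1 * z.2.1.1 + α 2 * z.2.1.2 + α 3 * z.1.2
          + α 4 * z.2.2.1 + α 5 * z.2.2.2)) / t) = _
    rw [← ψ.map_add_eq_mul, ← ψ.map_add_eq_mul]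
    congr 1
    field_simp
    ring
  simp only [hfact]
  rw [integral_prod_mul
    (f := fun z1 : ℚ_[p] × ℚ_[p] =>
      ψ ((x * b * z1.2 * z1.1 + α 3 * z1.2 + α 0 * z1.1) / t))
    (g := fun z2 : (ℚ_[p] × ℚ_[p]) × (ℚ_[p] × ℚ_[p]) =>
      ψ ((-(x * b) * z2.1.2 * z2.1.1 + α 2 * z2.1.2 + α 1 * z2.1.1) / t)
        * ψ ((-x * z2.2.2 * z2.2.1 + α 5 * z2.2.2 + α 4 * z2.2.1) / t))]
  rw [integral_prod_mul
    (f := fun z1 : ℚ_[p] × ℚ_[p] =>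
      ψ ((-(x * b) * z1.2 * z1.1 + α 2 * z1.2 + α 1 * z1.1) / t))
    (g := fun z2 : ℚ_[p] × ℚ_[p] =>
      ψ ((-x * z2.2 * z2.1 + α 5 * z2.2 + α 4 * z2.1) / t))]
  rw [two_dim hψ₁ hψ₂ hμ ht ht1 (x * b) (α 3) (α 0) (by rw [norm_mul, hx, hb, one_mul]),
    two_dim hψ₁ hψ₂ hμ ht ht1 (-(x * b)) (α 2) (α 1)
      (by rw [norm_neg, norm_mul, hx, hb, one_mul]),
    two_dim hψ₁ hψ₂ hμ ht ht1 (-x) (α 5) (α 4) (by rw [norm_neg, hx])]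
  by_cases hall : ∀ i, ‖α i‖ ≤ 1
  · rw [if_pos hall, if_pos ⟨hall 3, hall 0⟩, if_pos ⟨hall 2, hall 1⟩,
      if_pos ⟨hall 5, hall 4⟩]
    have hkey : ψ (-(α 3 * α 0) / (x * b * t))
        * (ψ (-(α 2 * α 1) / (-(x * b) * t)) * ψ (-(α 5 * α 4) / (-x * t)))
        = ψ (-((b⁻¹ * (α 0 * α 3 - α 1 * α 2) - α 4 * α 5) / (x * t))) := by
      rw [← ψ.map_add_eq_mul, ← ψ.map_add_eq_mul]
      congr 1
      rw [div_add_div _ _ (by simp [hx0, hb0, ht] : -(x*b)*t ≠ 0) (by simp [hx0, ht] : -x*t ≠ 0),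
        div_add_div _ _ (by simp [hx0, hb0, ht] : x*b*t ≠ 0)
          (by simp [hx0, hb0, ht] : (-(x*b)*t) * (-x*t) ≠ 0),
        ← neg_div,
        div_eq_div_iff (by simp [hx0, hb0, ht]) (by simp [hx0, ht] : x*t ≠ 0)]
      have hbb : b * b⁻¹ = 1 := mul_inv_cancel₀ hb0
      linear_combination (x^2*b*t^2*(α 0*α 3 - α 1*α 2)*x*t) * hbb
    linear_combination ((‖t‖ : ℂ)) ^ 3 * hkey
  · rw [if_neg hall]
    obtain ⟨i, hi⟩ := not_forall.1 hall
    fin_cases i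
    · rw [if_neg (fun h : ‖α 3‖ ≤ 1 ∧ ‖α 0‖ ≤ 1 => hi h.2)]; simp
    · rw [if_neg (fun h : ‖α 2‖ ≤ 1 ∧ ‖α 1‖ ≤ 1 => hi h.2)]; simp
    · rw [if_neg (fun h : ‖α 2‖ ≤ 1 ∧ ‖α 1‖ ≤ 1 => hi h.1)]; simp
    · rw [if_neg (fun h : ‖α 3‖ ≤ 1 ∧ ‖α 0‖ ≤ 1 => hi h.1)]; simp
    · rw [if_neg (fun h : ‖α 5‖ ≤ 1 ∧ ‖α 4‖ ≤ 1 => hi h.2)]; simp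
    · rw [if_neg (fun h : ‖α 5‖ ≤ 1 ∧ ‖α 4‖ ≤ 1 => hi h.1)]; simp
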